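/- Let α > N and let Ω ⊂ ℝ^N be a bounded open set with diameter strictly less than e^(1/(N−α)). Under the reflection setup, if Ω_λ has positive Lebesgue measure, then the logarithmic Riesz potential u(x) = ∫_Ω |x−y|^(α−N) log(1/|x−y|) dy satisfies u(x_λ) < u(x) for every x ∈ Σ_λ with x₁ < λ. -/

import Mathlib

open MeasureTheory


/-- Reflection of `x` across the hyperplane `{z : z 0 = l}`. -/
noncomputable def reflH {N : ℕ} [NeZero N] (l : ℝ) (x : EuclideanSpace ℝ (Fin N)) :
    EuclideanSpace ℝ (Fin N) :=
  WithLp.toLp 2 (Function.update x 0 (2 * l - x 0))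

section aux
variable {N : ℕ} [NeZero N] (l : ℝ)

lemma reflH_apply_zero (x : EuclideanSpace ℝ (Fin N)) : reflH l x 0 = 2 * l - x 0 :=
  by simp [reflH]

lemma reflH_apply_ne (x : EuclideanSpace ℝ (Fin N)) {i : Fin N} (hi : i ≠ 0) :
    reflH l x i = x i :=
  Function.update_of_ne hi _ _

lemma reflH_involutive : Function.Involutive (reflH (N := N) l) := by
  intro x
  ext i
  by_cases hi : i = 0
  · subst hi; simp [reflH, Function.update_self]
  · simp [reflH, Function.update_of_ne hi]

lemma reflH_norm_sub (x y : EuclideanSpace ℝ (Fin N)) :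
    ‖reflH l x - reflH l y‖ = ‖x - y‖ := by
  rw [EuclideanSpace.norm_eq, EuclideanSpace.norm_eq]
  congr 1
  refine Finset.sum_congr rfl fun i _ => ?_
  by_cases hi : i = 0
  · subst hi
    simp [PiLp.sub_apply, reflH_apply_zero, Real.norm_eq_abs]
    ring
  · simp [PiLp.sub_apply, reflH_apply_ne l _ hi]

lemma reflH_measurable : Measurable (reflH l : EuclideanSpace ℝ (Fin N) → _) := by
  refine (WithLp.measurable_toLp 2 _).comp (measurable_pi_iff.mpr fun i => ?_)
  by_cases hi : i = 0
  · subst hi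
    simp only [Function.update_self]
    exact (measurable_const.sub ((measurable_pi_apply 0).comp (WithLp.measurable_ofLp 2 _)))
  · simp only [Function.update_of_ne hi]
    exact (measurable_pi_apply i).comp (WithLp.measurable_ofLp 2 _)

/-- `reflH l` as a measurable equivalence. -/
noncomputable def reflHEquiv : EuclideanSpace ℝ (Fin N) ≃ᵐ EuclideanSpace ℝ (Fin N) where
  toFun := reflH l
  invFun := reflH l
  left_inv := reflH_involutive l
  right_inv := reflH_involutive l
  measurable_toFun := reflH_measurable l
  measurable_invFun := reflH_measurable l

lemma reflH_measurePreserving :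
    MeasurePreserving (reflH l : EuclideanSpace ℝ (Fin N) → _) volume volume := by
  have e := PiLp.volume_preserving_ofLp (Fin N)
  have hf : ∀ i : Fin N, MeasurePreserving
      ((if i = 0 then (fun t : ℝ => 2 * l - t) else id)) volume volume := by
    intro i
    by_cases hi : i = 0
    · subst hi
      simp only [if_pos rfl]
      have h1 : MeasurePreserving (fun t : ℝ => -t) volume volume :=
        Measure.measurePreserving_neg volume
      have h2 : MeasurePreserving (fun t : ℝ => 2 * l + t) volume volume :=
        measurePreserving_add_left volume (2 * l)
      simpa [Function.comp_def, sub_eq_add_neg] using h2.comp h1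
    · simpa [hi] using MeasurePreserving.id (volume : Measure ℝ)
  have epi : MeasurePreserving
      (fun (a : Fin N → ℝ) i => (if i = 0 then (fun t : ℝ => 2 * l - t) else id) (a i))
      volume volume := by
    have := measurePreserving_pi (fun _ : Fin N => (volume : Measure ℝ))
      (fun _ => volume) hf
    simpa [volume_pi] using this
  have : (reflH l : EuclideanSpace ℝ (Fin N) → _)
      = (WithLp.toLp 2) ∘
        (fun (a : Fin N → ℝ) i => (if i = 0 then (fun t : ℝ => 2 * l - t) else id) (a i)) ∘
        (WithLp.ofLp) := by
    funext x
    ext i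
    by_cases hi : i = 0
    · subst hi; simp [reflH, Function.update_self]
    · simp [reflH, Function.update_of_ne hi, hi]
  rw [this]
  exact ((PiLp.volume_preserving_toLp (Fin N)).comp epi).comp e

end aux


section aux3
variable {N : ℕ} [NeZero N] (l : ℝ)

lemma reflH_apply_zero' (x : EuclideanSpace ℝ (Fin N)) : reflH l x 0 = 2 * l - x 0 :=
  by simp [reflH]

lemma norm_reflH_sub_le {x y : EuclideanSpace ℝ (Fin N)} (hx : x 0 < l) (hy : l ≤ y 0) :
    ‖reflH l x - y‖ ≤ ‖x - y‖ := by
  rw [EuclideanSpace.norm_eq, EuclideanSpace.norm_eq]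
  apply Real.sqrt_le_sqrt
  apply Finset.sum_le_sum
  intro i _
  by_cases hi : i = 0
  · subst hi
    simp only [PiLp.sub_apply, Function.update_self, reflH, WithLp.ofLp_toLp, Real.norm_eq_abs, sq_abs]
    nlinarith [mul_nonneg (le_of_lt (sub_pos.mpr hx)) (sub_nonneg.mpr hy)]
  · simp [PiLp.sub_apply, reflH, Function.update_of_ne hi]

lemma norm_reflH_sub_lt {x y : EuclideanSpace ℝ (Fin N)} (hx : x 0 < l) (hy : l < y 0) :
    ‖reflH l x - y‖ < ‖x - y‖ := by
  rw [EuclideanSpace.norm_eq, EuclideanSpace.norm_eq]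
  apply Real.sqrt_lt_sqrt (Finset.sum_nonneg fun i _ => by positivity)
  apply Finset.sum_lt_sum
  · intro i _
    by_cases hi : i = 0
    · subst hi
      simp only [PiLp.sub_apply, Function.update_self, reflH, WithLp.ofLp_toLp, Real.norm_eq_abs, sq_abs]
      nlinarith [mul_nonneg (le_of_lt (sub_pos.mpr hx)) (le_of_lt (sub_pos.mpr hy))]
    · simp [PiLp.sub_apply, reflH, Function.update_of_ne hi]
  · refine ⟨0, Finset.mem_univ _, ?_⟩
    simp only [PiLp.sub_apply, Function.update_self, reflH, WithLp.ofLp_toLp, Real.norm_eq_abs, sq_abs]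
    nlinarith [mul_pos (sub_pos.mpr hx) (sub_pos.mpr hy)]

lemma hyperplane_volume_zero (c : ℝ) :
    volume {y : EuclideanSpace ℝ (Fin N) | y 0 = c} = 0 := by
  set φ : EuclideanSpace ℝ (Fin N) →ₗ[ℝ] ℝ :=
    { toFun := fun y => y 0, map_add' := fun a b => show (a + b) 0 = a 0 + b 0 from rfl, map_smul' := fun r a => show (r • a) 0 = r • a 0 from rfl } with hφ
  have hK : LinearMap.ker φ ≠ ⊤ := by
    intro h
    have h1 : (EuclideanSpace.single (0 : Fin N) (1 : ℝ)) ∈ LinearMap.ker φ := by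
      rw [h]; exact Submodule.mem_top
    rw [LinearMap.mem_ker] at h1
    have : φ (EuclideanSpace.single (0 : Fin N) (1 : ℝ)) = 1 := by
      simp [hφ, EuclideanSpace.single_apply, LinearMap.coe_mk, AddHom.coe_mk]
    rw [h1] at this
    norm_num at this
  have hK0 : volume ((LinearMap.ker φ : Submodule ℝ _) : Set (EuclideanSpace ℝ (Fin N))) = 0 :=
    Measure.addHaar_submodule volume _ hK
  have hset : {y : EuclideanSpace ℝ (Fin N) | y 0 = c}
      = (fun y => y + (-(EuclideanSpace.single (0 : Fin N) c))) ⁻¹'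
        ((LinearMap.ker φ : Submodule ℝ _) : Set (EuclideanSpace ℝ (Fin N))) := by
    ext y
    simp only [Set.mem_setOf_eq, Set.mem_preimage, SetLike.mem_coe, LinearMap.mem_ker, hφ,
      LinearMap.coe_mk, AddHom.coe_mk]
    have : (y + -EuclideanSpace.single (0 : Fin N) c) 0 = y 0 - c := by
      simp [EuclideanSpace.single_apply, sub_eq_add_neg]
    rw [this, sub_eq_zero]
  rw [hset, measure_preimage_add_right]
  exact hK0

end aux3


section Fprops
variable {β : ℝ}

lemma F_nonneg (hβ : 0 < β) {s : ℝ} (h0 : 0 ≤ s) (h1 : s ≤ 1) :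
    0 ≤ s ^ β * Real.log (1 / s) := by
  rcases h0.eq_or_lt with h | h
  · simp [← h, Real.zero_rpow hβ.ne']
  · exact mul_nonneg (Real.rpow_nonneg h0 _)
      (Real.log_nonneg (by rw [le_div_iff₀ h]; simpa using h1))

lemma F_pos (hβ : 0 < β) {s : ℝ} (h0 : 0 < s) (h1 : s < 1) :
    0 < s ^ β * Real.log (1 / s) :=
  mul_pos (Real.rpow_pos_of_pos h0 _) (Real.log_pos (one_lt_one_div h0 h1))

lemma F_strictMonoOn (hβ : 0 < β) :
    StrictMonoOn (fun s : ℝ => s ^ β * Real.log (1 / s))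
      (Set.Ioo 0 (Real.exp (-(1 / β)))) := by
  have hfun : (fun s : ℝ => s ^ β * Real.log (1 / s))
      = fun s : ℝ => -(s ^ β * Real.log s) := by
    funext s
    rw [one_div, Real.log_inv, mul_neg]
  rw [hfun]
  have hanti : StrictAntiOn (fun s : ℝ => s ^ β * Real.log s)
      (Set.Ioo 0 (Real.exp (-(1 / β)))) := by
    apply strictAntiOn_of_deriv_neg (convex_Ioo _ _)
    · apply ContinuousOn.mul
      · exact (continuousOn_id.rpow_const fun x hx => Or.inl (ne_of_gt hx.1))
      · exact Real.continuousOn_log.mono fun x hx => ne_of_gt hx.1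
    · intro s hs
      rw [interior_Ioo] at hs
      obtain ⟨hs0, hs1⟩ := hs
      have hd : HasDerivAt (fun s : ℝ => s ^ β * Real.log s)
          (β * s ^ (β - 1) * Real.log s + s ^ β * s⁻¹) s := by
        exact (Real.hasDerivAt_rpow_const (Or.inl hs0.ne')).mul (Real.hasDerivAt_log hs0.ne')
      rw [hd.deriv]
      have hpow : s ^ β * s⁻¹ = s ^ (β - 1) := by
        rw [Real.rpow_sub hs0, Real.rpow_one, div_eq_mul_inv]
      have hlog : Real.log s < -(1 / β) := by
        calc Real.log s < Real.log (Real.exp (-(1 / β))) := Real.log_lt_log hs0 hs1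
        _ = -(1 / β) := Real.log_exp _
      have hppos : (0:ℝ) < s ^ (β - 1) := Real.rpow_pos_of_pos hs0 _
      have : β * Real.log s < -1 := by
        have := (mul_lt_mul_iff_right₀ hβ).mpr hlog
        rwa [mul_neg, mul_one_div, div_self hβ.ne'] at this
      rw [hpow]
      nlinarith
  intro a ha b hb hab
  simpa using neg_lt_neg (hanti ha hb hab)

lemma F_le_bound (hβ : 0 < β) {s : ℝ} (h0 : 0 ≤ s) (h1 : s ≤ 1) :
    s ^ β * Real.log (1 / s) ≤ 2 / β := by
  rcases h0.eq_or_lt with h | h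
  · simp [← h, Real.zero_rpow hβ.ne']
    positivity
  · have hylog : Real.log (1 / s) ≤ (2 / β) * s ^ (-(β / 2)) := by
      have hy : (0:ℝ) < s ^ (-(β / 2)) := Real.rpow_pos_of_pos h _
      have h2 : Real.log (s ^ (-(β / 2))) = -(β / 2) * Real.log s := Real.log_rpow h _
      have h3 : Real.log (s ^ (-(β / 2))) ≤ s ^ (-(β / 2)) :=
        (Real.log_le_sub_one_of_pos hy).trans (by linarith)
      rw [one_div, Real.log_inv]
      have : -Real.log s = (2 / β) * Real.log (s ^ (-(β / 2))) := by
        rw [h2]; field_simp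
      rw [this]
      apply mul_le_mul_of_nonneg_left h3 (by positivity)
    calc s ^ β * Real.log (1 / s) ≤ s ^ β * ((2 / β) * s ^ (-(β / 2))) :=
          mul_le_mul_of_nonneg_left hylog (Real.rpow_nonneg h0 _)
      _ = (2 / β) * s ^ (β / 2) := by
          rw [show s ^ β * (2 / β * s ^ (-(β / 2))) = (2 / β) * (s ^ β * s ^ (-(β / 2))) by ring,
            ← Real.rpow_add h]
          ring_nf
      _ ≤ (2 / β) * 1 := by
          apply mul_le_mul_of_nonneg_left (Real.rpow_le_one h0 h1 (by positivity)) (by positivity)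
      _ = 2 / β := mul_one _

end Fprops



/-- `Σ_λ = {x ∈ Ω : x₁ < λ}`. -/
def sigmaL {N : ℕ} [NeZero N] (Ω : Set (EuclideanSpace ℝ (Fin N))) (l : ℝ) :
    Set (EuclideanSpace ℝ (Fin N)) :=
  {x ∈ Ω | x 0 < l}

/-- `Ω_λ = Ω \ closure (Σ_λ ∪ Σ'_λ)`. -/
noncomputable def omegaL {N : ℕ} [NeZero N] (Ω : Set (EuclideanSpace ℝ (Fin N))) (l : ℝ) :
    Set (EuclideanSpace ℝ (Fin N)) :=
  Ω \ closure (sigmaL Ω l ∪ reflH l '' sigmaL Ω l)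

/-- For `α > N` and `diam Ω < e^(1/(N−α))`: if `Ω_λ` has positive Lebesgue measure,
the logarithmic Riesz potential `u(x) = ∫_Ω |x−y|^(α−N) log(1/|x−y|) dy` satisfies
`u(x_λ) < u(x)` for every `x ∈ Σ_λ`. -/
theorem log_riesz_potential_reflection_lt {N : ℕ} [NeZero N]
    (Ω : Set (EuclideanSpace ℝ (Fin N))) (hΩo : IsOpen Ω) (hΩb : Bornology.IsBounded Ω)
    (α : ℝ) (hα : (N : ℝ) < α) (hdiam : Metric.diam Ω < Real.exp (1 / ((N : ℝ) - α)))
    (l : ℝ) (hrefl : reflH l '' sigmaL Ω l ⊆ Ω)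
    (hpos : 0 < volume (omegaL Ω l)) :
    ∀ x ∈ Ω, x 0 < l →
      (∫ y in Ω, ‖reflH l x - y‖ ^ (α - N) * Real.log (1 / ‖reflH l x - y‖))
        < ∫ y in Ω, ‖x - y‖ ^ (α - N) * Real.log (1 / ‖x - y‖) := by
  intro x hx hxl
  have hβ : 0 < α - (N : ℝ) := sub_pos.mpr hα
  set F : ℝ → ℝ := fun s => s ^ (α - (N : ℝ)) * Real.log (1 / s) with hFdef
  show (∫ y in Ω, F ‖reflH l x - y‖) < ∫ y in Ω, F ‖x - y‖
  -- diameter bound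
  have hd0 : (1 : ℝ) / ((N : ℝ) - α) = -(1 / (α - (N : ℝ))) := by
    rw [show (N : ℝ) - α = -(α - (N : ℝ)) by ring, one_div, inv_neg, one_div]
  rw [hd0] at hdiam
  have hexp1 : Real.exp (-(1 / (α - (N : ℝ)))) < 1 := by
    have h1 : 0 < 1 / (α - (N : ℝ)) := by positivity
    have h2 : Real.exp (-(1 / (α - (N : ℝ)))) < Real.exp 0 :=
      Real.exp_lt_exp.mpr (by linarith)
    simpa using h2
  have hdist : ∀ y ∈ Ω, ∀ z ∈ Ω, ‖z - y‖ < Real.exp (-(1 / (α - (N : ℝ)))) := by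
    intro y hy z hz
    refine lt_of_le_of_lt ?_ hdiam
    rw [← dist_eq_norm]
    exact Metric.dist_le_diam_of_mem hΩb hz hy
  have hxm : x ∈ sigmaL Ω l := ⟨hx, hxl⟩
  have hRx : reflH l x ∈ Ω := hrefl ⟨x, hxm, rfl⟩
  -- sets
  have hA'pre : reflH l '' sigmaL Ω l = reflH l ⁻¹' sigmaL Ω l := by
    ext z
    constructor
    · rintro ⟨w, hw, rfl⟩
      simpa [Set.mem_preimage, reflH_involutive l w] using hw
    · intro hz
      exact ⟨reflH l z, hz, reflH_involutive l z⟩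
  have hmA : MeasurableSet (sigmaL Ω l) :=
    hΩo.measurableSet.inter (measurableSet_lt ((measurable_pi_apply 0).comp (WithLp.measurable_ofLp 2 _)) measurable_const)
  have hmA' : MeasurableSet (reflH l '' sigmaL Ω l) := by
    rw [hA'pre]; exact hmA.preimage (reflH_measurable l)
  set A := sigmaL Ω l with hAdef
  set A' := reflH l '' sigmaL Ω l with hA'def
  set B := Ω \ (A ∪ A') with hBdef
  have hmB : MeasurableSet B := hΩo.measurableSet.diff (hmA.union hmA')
  have hsubΩ : A ∪ A' ⊆ Ω := Set.union_subset (fun y hy => hy.1) hrefl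
  have hBsubΩ : B ⊆ Ω := Set.diff_subset
  have hunion : Ω = (A ∪ A') ∪ B := (Set.union_diff_cancel hsubΩ).symm
  -- integrability
  have hint : ∀ z ∈ Ω, IntegrableOn (fun y => F ‖z - y‖) Ω volume := by
    intro z hz
    apply Measure.integrableOn_of_bounded (M := 2 / (α - (N : ℝ))) hΩb.measure_lt_top.ne
    · have m1 : Measurable F := by
        apply Measurable.mul
        · exact (Real.continuous_rpow_const hβ.le).measurable
        · exact Real.measurable_log.comp (measurable_const.div measurable_id)
      have m2 : Measurable fun y : EuclideanSpace ℝ (Fin N) => ‖z - y‖ :=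
        (continuous_const.sub continuous_id).norm.measurable
      exact (m1.comp m2).aestronglyMeasurable
    · rw [ae_restrict_iff' hΩo.measurableSet]
      apply ae_of_all
      intro y hy
      have h1 : ‖z - y‖ ≤ 1 := le_of_lt (lt_trans (hdist y hy z hz) hexp1)
      have h0 : (0:ℝ) ≤ ‖z - y‖ := norm_nonneg _
      rw [Real.norm_eq_abs, abs_of_nonneg (F_nonneg hβ h0 h1)]
      exact F_le_bound hβ h0 h1
  -- transfers over A'
  have hmp := reflH_measurePreserving (N := N) l
  have hemb := (reflHEquiv (N := N) l).measurableEmbedding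
  have t1 : (∫ y in A', F ‖reflH l x - y‖) = ∫ y in A, F ‖x - y‖ := by
    rw [hA'def, hmp.setIntegral_image_emb hemb (fun y => F ‖reflH l x - y‖) (sigmaL Ω l)]
    simp_rw [reflH_norm_sub l x]
    rfl
  have t2 : (∫ y in A', F ‖x - y‖) = ∫ y in A, F ‖reflH l x - y‖ := by
    rw [hA'def, hmp.setIntegral_image_emb hemb (fun y => F ‖x - y‖) (sigmaL Ω l)]
    have : ∀ w, ‖x - reflH l w‖ = ‖reflH l x - w‖ := by
      intro w
      conv_rhs => rw [← reflH_involutive l w]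
      rw [reflH_norm_sub l x (reflH l w)]
    simp_rw [this]
    rfl
  have hdisjAA' : Disjoint A A' := by
    rw [Set.disjoint_left]
    rintro a ha ⟨w, hw, rfl⟩
    have h1 : reflH l w 0 = 2 * l - w 0 := reflH_apply_zero l w
    have h2 : reflH l w 0 < l := ha.2
    have h3 : w 0 < l := hw.2
    rw [h1] at h2
    linarith
  have hdisjB : Disjoint (A ∪ A') B := Set.disjoint_sdiff_right
  -- splitting
  have split : ∀ z ∈ Ω, (∫ y in Ω, F ‖z - y‖)
      = (∫ y in A, F ‖z - y‖) + (∫ y in A', F ‖z - y‖) + ∫ y in B, F ‖z - y‖ := by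
    intro z hz
    have hI := hint z hz
    have hIA : IntegrableOn (fun y => F ‖z - y‖) A volume :=
      hI.mono_set fun y hy => hy.1
    have hIA' : IntegrableOn (fun y => F ‖z - y‖) A' volume :=
      hI.mono_set hrefl
    have hIB : IntegrableOn (fun y => F ‖z - y‖) B volume := hI.mono_set hBsubΩ
    calc (∫ y in Ω, F ‖z - y‖) = ∫ y in (A ∪ A') ∪ B, F ‖z - y‖ := by rw [← hunion]
      _ = (∫ y in A ∪ A', F ‖z - y‖) + ∫ y in B, F ‖z - y‖ :=
          setIntegral_union hdisjB hmB (hIA.union hIA') hIB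
      _ = (∫ y in A, F ‖z - y‖) + (∫ y in A', F ‖z - y‖) + ∫ y in B, F ‖z - y‖ := by
          rw [setIntegral_union hdisjAA' hmA' hIA hIA']
  have key : (∫ y in Ω, F ‖reflH l x - y‖) - (∫ y in Ω, F ‖x - y‖)
      = (∫ y in B, F ‖reflH l x - y‖) - ∫ y in B, F ‖x - y‖ := by
    rw [split _ hRx, split _ hx, t1, t2]
    ring
  -- pointwise comparison
  have hBmem : ∀ y ∈ B, y ∈ Ω ∧ l ≤ y 0 := by
    intro y hy
    refine ⟨hy.1, ?_⟩
    by_contra h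
    push_neg at h
    exact hy.2 (Or.inl ⟨hy.1, h⟩)
  have hcomp : ∀ y ∈ Ω, l ≤ y 0 → F ‖reflH l x - y‖ ≤ F ‖x - y‖ := by
    intro y hy hly
    have hxy_pos : (0:ℝ) < ‖x - y‖ := by
      rw [norm_pos_iff, sub_ne_zero]
      intro h
      exact absurd (congrArg (fun v : EuclideanSpace ℝ (Fin N) => v 0) h)
        (ne_of_lt (lt_of_lt_of_le hxl hly))
    have hxy_lt : ‖x - y‖ < Real.exp (-(1 / (α - (N : ℝ)))) := hdist y hy x hx
    have hle' : ‖reflH l x - y‖ ≤ ‖x - y‖ := norm_reflH_sub_le l hxl hly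
    rcases eq_or_lt_of_le hle' with heq | hlt
    · rw [heq]
    · rcases eq_or_lt_of_le (norm_nonneg (reflH l x - y)) with h0 | h0
      · rw [← h0]
        have : F 0 = 0 := by simp [hFdef, Real.zero_rpow hβ.ne']
        rw [this]
        exact F_nonneg hβ (norm_nonneg _) (le_of_lt (lt_trans hxy_lt hexp1))
      · exact le_of_lt ((F_strictMonoOn hβ) ⟨h0, lt_of_le_of_lt hle' hxy_lt⟩
          ⟨hxy_pos, hxy_lt⟩ hlt)
  have hcomp_strict : ∀ y ∈ Ω, l < y 0 → F ‖reflH l x - y‖ < F ‖x - y‖ := by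
    intro y hy hly
    have hxy_pos : (0:ℝ) < ‖x - y‖ := by
      rw [norm_pos_iff, sub_ne_zero]
      intro h
      exact absurd (congrArg (fun v : EuclideanSpace ℝ (Fin N) => v 0) h)
        (ne_of_lt (lt_trans hxl hly))
    have hxy_lt : ‖x - y‖ < Real.exp (-(1 / (α - (N : ℝ)))) := hdist y hy x hx
    have hlt' : ‖reflH l x - y‖ < ‖x - y‖ := norm_reflH_sub_lt l hxl hly
    rcases eq_or_lt_of_le (norm_nonneg (reflH l x - y)) with h0 | h0
    · rw [← h0]
      have : F 0 = 0 := by simp [hFdef, Real.zero_rpow hβ.ne']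
      rw [this]
      exact F_pos hβ hxy_pos (lt_trans hxy_lt hexp1)
    · exact (F_strictMonoOn hβ) ⟨h0, lt_trans hlt' hxy_lt⟩ ⟨hxy_pos, hxy_lt⟩ hlt'
  -- the positive-measure subset
  have homegaB : omegaL Ω l ⊆ B := by
    intro y hy
    exact ⟨hy.1, fun h => hy.2 (subset_closure h)⟩
  have hSvol : 0 < volume (omegaL Ω l \ {y : EuclideanSpace ℝ (Fin N) | y 0 = l}) := by
    rwa [measure_diff_null (hyperplane_volume_zero l)]
  -- strict inequality on B
  have hIB1 : IntegrableOn (fun y => F ‖reflH l x - y‖) B volume :=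
    (hint _ hRx).mono_set hBsubΩ
  have hIB2 : IntegrableOn (fun y => F ‖x - y‖) B volume :=
    (hint _ hx).mono_set hBsubΩ
  have hposB : 0 < ∫ y in B, (F ‖x - y‖ - F ‖reflH l x - y‖) := by
    rw [setIntegral_pos_iff_support_of_nonneg_ae]
    · refine lt_of_lt_of_le hSvol (measure_mono ?_)
      intro y hy
      obtain ⟨hyo, hyne⟩ := hy
      have hyB : y ∈ B := homegaB hyo
      obtain ⟨hyΩ, hyl⟩ := hBmem y hyB
      have hylt : l < y 0 := lt_of_le_of_ne hyl (Ne.symm hyne)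
      refine ⟨?_, hyB⟩
      simp only [Function.mem_support]
      exact ne_of_gt (sub_pos.mpr (hcomp_strict y hyΩ hylt))
    · filter_upwards [ae_restrict_mem hmB] with y hy
      obtain ⟨hyΩ, hyl⟩ := hBmem y hy
      simpa using sub_nonneg.mpr (hcomp y hyΩ hyl)
    · exact hIB2.sub hIB1
  have hdiffB : (∫ y in B, (F ‖x - y‖ - F ‖reflH l x - y‖))
      = (∫ y in B, F ‖x - y‖) - ∫ y in B, F ‖reflH l x - y‖ :=
    integral_sub hIB2 hIB1
  linarith [key, hposB, hdiffB]
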